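/- Suppose θ > -∞, w_j are twice continuously differentiable, strictly decreasing, with sub-quadratic second derivatives (ω_j(p) = w_j''(p)/w_j'(p)^2 < 1 for all p). If p_f ∈ (0,∞)^{J_f} satisfies the first-order condition (∇_f π̂_f)(p_f, p_{-f}) = 0, then the intra-firm Hessian of profit at p is the diagonal matrix (D_f ∇_f π̂_f)(p) = Λ_f(p)(I - Ω_f(p_f)), where Λ_f(p) = diag(w_j'(p_j) P_j(p)) and Ω_f(p_f) = diag(ω_j(p_j)); this matrix is negative definite, so every stationary point of π̂_f(·, p_{-f}) is a strict local maximizer. -/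

import Mathlib

open Filter Set Topology

namespace Stmt10Aux

noncomputable section

variable {J : ℕ} (w w' w'' : Fin J → ℝ → ℝ) (v : Fin J → ℝ) (θ : ℝ)
  (c : Fin J → ℝ) (Jf : Finset (Fin J))

def pr (i : Fin J) : (Fin J → ℝ) →L[ℝ] ℝ := ContinuousLinearMap.proj i

@[simp] lemma pr_apply (i : Fin J) (x : Fin J → ℝ) : pr i x = x i := rfl

def Ef (i : Fin J) (q : Fin J → ℝ) : ℝ := Real.exp (w i (q i) + v i)
def Sf (q : Fin J → ℝ) : ℝ := Real.exp θ + ∑ k, Ef w v k q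
def Pf (q : Fin J → ℝ) (i : Fin J) : ℝ := Ef w v i q / Sf w v θ q
def prof (q : Fin J → ℝ) : ℝ := ∑ i ∈ Jf, Pf w v θ q i * (q i - c i)

lemma Ef_pos (i : Fin J) (q : Fin J → ℝ) : 0 < Ef w v i q := Real.exp_pos _

lemma Sf_pos (q : Fin J → ℝ) : 0 < Sf w v θ q :=
  add_pos_of_pos_of_nonneg (Real.exp_pos _)
    (Finset.sum_nonneg fun k _ => (Ef_pos w v k q).le)

lemma Pf_pos (q : Fin J → ℝ) (i : Fin J) : 0 < Pf w v θ q i :=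
  div_pos (Ef_pos w v i q) (Sf_pos w v θ q)

def dE (i : Fin J) (q : Fin J → ℝ) : (Fin J → ℝ) →L[ℝ] ℝ :=
  (Ef w v i q * w' i (q i)) • pr i

def dS (q : Fin J → ℝ) : (Fin J → ℝ) →L[ℝ] ℝ := ∑ k, dE w w' v k q

def dP (i : Fin J) (q : Fin J → ℝ) : (Fin J → ℝ) →L[ℝ] ℝ :=
  Ef w v i q • ((-((Sf w v θ q) ^ 2)⁻¹) • dS w w' v q) + (Sf w v θ q)⁻¹ • dE w w' v i q

def dπ (q : Fin J → ℝ) : (Fin J → ℝ) →L[ℝ] ℝ :=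
  ∑ i ∈ Jf, (Pf w v θ q i • pr i + (q i - c i) • dP w w' v θ i q)

variable (hd1 : ∀ k : Fin J, ∀ x > (0:ℝ), HasDerivAt (w k) (w' k x) x)
  (hd2 : ∀ k : Fin J, ∀ x > (0:ℝ), HasDerivAt (w' k) (w'' k x) x)

section derivs
variable {q : Fin J → ℝ} (hq : ∀ i, 0 < q i)

include hd1 hq in
lemma hE (i : Fin J) : HasFDerivAt (Ef w v i) (dE w w' v i q) q := by
  have h0 : HasFDerivAt (fun q : Fin J → ℝ => q i) (pr i) q :=
    (pr i).hasFDerivAt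
  have h1 : HasFDerivAt (fun q : Fin J → ℝ => w i (q i)) ((w' i (q i)) • pr i) q :=
    (hd1 i (q i) (hq i)).comp_hasFDerivAt q h0
  have h2 := (h1.add_const (v i)).exp
  have : Real.exp (w i (q i) + v i) • ((w' i (q i)) • pr i) = dE w w' v i q := by
    rw [smul_smul]; rfl
  rw [this] at h2
  exact h2

include hd1 hq in
lemma hS : HasFDerivAt (Sf w v θ) (dS w w' v q) q := by
  have := HasFDerivAt.fun_sum (u := Finset.univ)
    (fun k _ => hE w w' v hd1 hq k)
  exact this.const_add (Real.exp θ)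

include hd1 hq in
lemma hP (i : Fin J) : HasFDerivAt (fun q => Pf w v θ q i) (dP w w' v θ i q) q := by
  have hSne : Sf w v θ q ≠ 0 := (Sf_pos w v θ q).ne'
  have hinv : HasFDerivAt (fun q => (Sf w v θ q)⁻¹)
      ((-((Sf w v θ q) ^ 2)⁻¹) • dS w w' v q) q :=
    (hasDerivAt_inv hSne).comp_hasFDerivAt q (hS w w' v θ hd1 hq)
  have h := (hE w w' v hd1 hq i).fun_mul hinv
  have heq : (fun q => Ef w v i q * (Sf w v θ q)⁻¹) = fun q => Pf w v θ q i := by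
    funext x; rw [Pf, div_eq_mul_inv]
  rw [heq] at h
  exact h

include hd1 hq in
lemma hprof : HasFDerivAt (prof w v θ c Jf) (dπ w w' v θ c Jf q) q := by
  have := HasFDerivAt.fun_sum (u := Jf) (fun i _ =>
    (hP w w' v θ hd1 hq i).fun_mul (((pr i).hasFDerivAt.sub_const (c i))))
  exact this

end derivs

lemma dE_single (i l : Fin J) (q : Fin J → ℝ) :
    dE w w' v i q (Pi.single l 1) = if i = l then Ef w v i q * w' i (q i) else 0 := by
  simp [dE, Pi.single_apply, mul_ite]

lemma dS_single (l : Fin J) (q : Fin J → ℝ) :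
    dS w w' v q (Pi.single l 1) = Ef w v l q * w' l (q l) := by
  simp [dS, ContinuousLinearMap.sum_apply, dE_single, Finset.sum_ite_eq]

lemma dP_single (i l : Fin J) (q : Fin J → ℝ) :
    dP w w' v θ i q (Pi.single l 1)
      = w' l (q l) * Pf w v θ q l * ((if i = l then 1 else 0) - Pf w v θ q i) := by
  have hSne : Sf w v θ q ≠ 0 := (Sf_pos w v θ q).ne'
  simp only [dP, ContinuousLinearMap.add_apply, ContinuousLinearMap.smul_apply,
    dS_single, dE_single, smul_eq_mul, Pf]
  by_cases h : i = l
  · subst h; simp only [if_pos rfl, ↓reduceIte]; field_simp; ring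
  · simp only [if_neg h]; field_simp; ring

lemma dπ_single (l : Fin J) (hl : l ∈ Jf) (q : Fin J → ℝ) :
    dπ w w' v θ c Jf q (Pi.single l 1)
      = Pf w v θ q l + w' l (q l) * Pf w v θ q l * ((q l - c l) - prof w v θ c Jf q) := by
  simp only [dπ, ContinuousLinearMap.sum_apply, ContinuousLinearMap.add_apply,
    ContinuousLinearMap.smul_apply, dP_single, pr_apply, Pi.single_apply, smul_eq_mul]
  rw [Finset.sum_add_distrib]
  have h1 : (∑ i ∈ Jf, Pf w v θ q i * (if i = l then 1 else 0)) = Pf w v θ q l := by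
    simp [mul_ite, Finset.sum_ite_eq, hl]
  have h2 : (∑ i ∈ Jf, (q i - c i) * (w' l (q l) * Pf w v θ q l *
      ((if i = l then 1 else 0) - Pf w v θ q i)))
      = w' l (q l) * Pf w v θ q l * ((q l - c l) - prof w v θ c Jf q) := by
    have : ∀ i ∈ Jf, (q i - c i) * (w' l (q l) * Pf w v θ q l *
        ((if i = l then 1 else 0) - Pf w v θ q i))
        = (if i = l then w' l (q l) * Pf w v θ q l * (q i - c i) else 0)
          - w' l (q l) * Pf w v θ q l * (Pf w v θ q i * (q i - c i)) := by
      intro i _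
      by_cases h : i = l <;> simp [h] <;> ring
    rw [Finset.sum_congr rfl this, Finset.sum_sub_distrib, Finset.sum_ite_eq', if_pos hl,
      ← Finset.mul_sum, prof]
    ring
  rw [h1, h2]

def g (k : Fin J) (q : Fin J → ℝ) : ℝ :=
  Pf w v θ q k + w' k (q k) * Pf w v θ q k * ((q k - c k) - prof w v θ c Jf q)

def dG (k : Fin J) (q : Fin J → ℝ) : (Fin J → ℝ) →L[ℝ] ℝ :=
  dP w w' v θ k q +
    ((w' k (q k) * Pf w v θ q k) • (pr k - dπ w w' v θ c Jf q) +
      ((q k - c k) - prof w v θ c Jf q) •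
        (w' k (q k) • dP w w' v θ k q + Pf w v θ q k • (w'' k (q k) • pr k)))

include hd1 hd2 in
lemma hG {q : Fin J → ℝ} (hq : ∀ i, 0 < q i) (k : Fin J) :
    HasFDerivAt (g w w' v θ c Jf k) (dG w w' w'' v θ c Jf k q) q := by
  have h0 : HasFDerivAt (fun q : Fin J → ℝ => q k) (pr k) q := (pr k).hasFDerivAt
  have h1 := hP w w' v θ hd1 hq k
  have h2 : HasFDerivAt (fun q : Fin J → ℝ => w' k (q k)) ((w'' k (q k)) • pr k) q :=
    (hd2 k (q k) (hq k)).comp_hasFDerivAt q h0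
  have h3 : HasFDerivAt (fun q : Fin J → ℝ => (q k - c k) - prof w v θ c Jf q)
      (pr k - dπ w w' v θ c Jf q) q :=
    (h0.sub_const (c k)).sub (hprof w w' v θ c Jf hd1 hq)
  have h4 := h2.mul h1
  have h5 := h4.mul h3
  exact h1.add h5

lemma pi_single_expand (u : Fin J → ℝ) (hu : ∀ i, i ∉ Jf → u i = 0) :
    u = ∑ k ∈ Jf, u k • (Pi.single k 1 : Fin J → ℝ) := by
  funext i
  rw [Finset.sum_apply]
  simp only [Pi.smul_apply, Pi.single_apply, smul_eq_mul, mul_ite, mul_one, mul_zero]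
  rw [Finset.sum_ite_eq Jf i u]
  by_cases h : i ∈ Jf
  · simp [h]
  · simp [h, hu i h]

lemma clm_apply_supported (T : (Fin J → ℝ) →L[ℝ] ℝ) (u : Fin J → ℝ)
    (hu : ∀ i, i ∉ Jf → u i = 0) :
    T u = ∑ k ∈ Jf, u k * T (Pi.single k 1) := by
  conv_lhs => rw [pi_single_expand Jf u hu]
  rw [map_sum]
  simp [smul_eq_mul]

end

end Stmt10Aux


open Stmt10Aux in
theorem stmt_10 {J : ℕ} (w w' w'' : Fin J → ℝ → ℝ) (v : Fin J → ℝ) (θ : ℝ)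
    (c : Fin J → ℝ) (Jf : Finset (Fin J)) (hc : ∀ j, 0 ≤ c j)
    (hd1 : ∀ k : Fin J, ∀ x > (0:ℝ), HasDerivAt (w k) (w' k x) x)
    (hd2 : ∀ k : Fin J, ∀ x > (0:ℝ), HasDerivAt (w' k) (w'' k x) x)
    (hneg : ∀ k : Fin J, ∀ x > (0:ℝ), w' k x < 0)
    (hsq : ∀ k : Fin J, ∀ x > (0:ℝ), w'' k x / (w' k x) ^ 2 < 1)
    (p : Fin J → ℝ) (hp : ∀ i, 0 < p i)
    (hstat : ∀ j ∈ Jf,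
      HasDerivAt
        (fun x => ∑ i ∈ Jf,
          (Real.exp (w i ((Function.update p j x) i) + v i) /
              (Real.exp θ + ∑ k, Real.exp (w k ((Function.update p j x) k) + v k))) *
            ((Function.update p j x) i - c i)) 0 (p j)) :
    let P : (Fin J → ℝ) → Fin J → ℝ := fun q i =>
      Real.exp (w i (q i) + v i) / (Real.exp θ + ∑ k, Real.exp (w k (q k) + v k))
    let profit : (Fin J → ℝ) → ℝ := fun q => ∑ i ∈ Jf, P q i * (q i - c i)
    -- the intra-firm Hessian at p is diagonal: Λ_f(p)(I - Ω_f(p_f))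
    (∀ k ∈ Jf, ∀ l ∈ Jf,
      (fderiv ℝ (fun q => fderiv ℝ profit q (Pi.single k 1)) p) (Pi.single l 1)
        = if k = l then (w' k (p k) * P p k) * (1 - w'' k (p k) / (w' k (p k)) ^ 2)
          else 0) ∧
    -- the diagonal entries are negative (negative definiteness)
    (∀ k ∈ Jf, (w' k (p k) * P p k) * (1 - w'' k (p k) / (w' k (p k)) ^ 2) < 0) ∧
    -- hence p is a strict local maximizer of the firm's profit
    (∃ ε > (0:ℝ), ∀ q : Fin J → ℝ, (∀ i, i ∉ Jf → q i = p i) → q ≠ p →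
      dist q p < ε → profit q < profit p) := by
  intro P profit
  have hPP : P = Pf w v θ := rfl
  have hprofit : profit = prof w v θ c Jf := rfl
  rw [hPP, hprofit]
  have hPfpos := Pf_pos w v θ
  have hw'ne : ∀ k, w' k (p k) ≠ 0 := fun k => (hneg k (p k) (hp k)).ne
  -- the positive orthant is a neighborhood of p
  have hUopen : IsOpen {q : Fin J → ℝ | ∀ i, 0 < q i} := by
    have : {q : Fin J → ℝ | ∀ i, 0 < q i} = ⋂ i, (fun q : Fin J → ℝ => q i) ⁻¹' Ioi 0 := by
      ext q; simp [mem_iInter]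
    rw [this]
    exact isOpen_iInter_of_finite fun i => isOpen_Ioi.preimage (continuous_apply i)
  have hUnhds : {q : Fin J → ℝ | ∀ i, 0 < q i} ∈ 𝓝 p := hUopen.mem_nhds hp
  -- first-order conditions
  have foc : ∀ j ∈ Jf, dπ w w' v θ c Jf p (Pi.single j 1) = 0 := by
    intro j hj
    have hupd : HasDerivAt (fun x => Function.update p j x)
        (Pi.single j 1 : Fin J → ℝ) (p j) := by
      rw [hasDerivAt_pi]
      intro i
      by_cases h : i = j
      · subst h
        have h1 : (fun x => Function.update p i x i) = fun x => x := by
          funext x; simp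
        rw [h1, Pi.single_eq_same]
        exact hasDerivAt_id (p i)
      · have h1 : (fun x => Function.update p j x i) = fun _ => p i := by
          funext x; simp [Function.update_apply, h]
        rw [h1, Pi.single_eq_of_ne h]
        exact hasDerivAt_const _ _
    have hpro : HasFDerivAt (prof w v θ c Jf) (dπ w w' v θ c Jf p)
        (Function.update p j (p j)) := by
      rw [Function.update_eq_self]
      exact hprof w w' v θ c Jf hd1 hp
    have hcomp := hpro.comp_hasDerivAt (p j) hupd
    exact ((hstat j hj).unique hcomp).symm
  have foc' : ∀ j ∈ Jf, w' j (p j) * ((p j - c j) - prof w v θ c Jf p) = -1 := by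
    intro j hj
    have h0 := foc j hj
    rw [dπ_single w w' v θ c Jf j hj p] at h0
    have h1 : Pf w v θ p j *
        (1 + w' j (p j) * ((p j - c j) - prof w v θ c Jf p)) = 0 := by
      linear_combination h0
    rcases mul_eq_zero.1 h1 with h | h
    · exact absurd h (hPfpos p j).ne'
    · linarith
  -- the Hessian entries
  have hess : ∀ k ∈ Jf, ∀ l ∈ Jf, dG w w' w'' v θ c Jf k p (Pi.single l 1)
      = if k = l then (w' k (p k) * Pf w v θ p k) *
          (1 - w'' k (p k) / (w' k (p k)) ^ 2) else 0 := by
    intro k hk l hl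
    have hA := foc' k hk
    have hA' : (p k - c k) - prof w v θ c Jf p = -1 / w' k (p k) := by
      rw [eq_div_iff (hw'ne k)]
      linear_combination hA
    simp only [dG, ContinuousLinearMap.add_apply, ContinuousLinearMap.sub_apply,
      ContinuousLinearMap.smul_apply, dP_single, pr_apply, Pi.single_apply, foc l hl,
      smul_eq_mul, hA']
    by_cases h : k = l
    · subst h
      simp only [if_pos rfl, ↓reduceIte]
      field_simp [hw'ne k]
      ring
    · simp only [if_neg h]
      field_simp [hw'ne k]
      ring
  refine ⟨?_, ?_, ?_⟩
  · -- Hessian is as claimed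
    intro k hk l hl
    have heq : (fun q => fderiv ℝ (prof w v θ c Jf) q (Pi.single k 1))
        =ᶠ[𝓝 p] g w w' v θ c Jf k := by
      filter_upwards [hUnhds] with q hq
      have h1 : fderiv ℝ (prof w v θ c Jf) q = dπ w w' v θ c Jf q :=
        (hprof w w' v θ c Jf hd1 hq).fderiv
      rw [h1, dπ_single w w' v θ c Jf k hk q]
      rfl
    rw [heq.fderiv_eq, (hG w w' w'' v θ c Jf hd1 hd2 hp k).fderiv]
    exact hess k hk l hl
  · -- negativity of diagonal entries
    intro k hk
    exact mul_neg_of_neg_of_pos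
      (mul_neg_of_neg_of_pos (hneg k (p k) (hp k)) (hPfpos p k))
      (by linarith [hsq k (p k) (hp k)])
  · -- strict local maximizer
    rcases Finset.eq_empty_or_nonempty Jf with hJf | hJfne
    · exact ⟨1, one_pos, fun q hq hqp _ =>
        absurd (funext fun i => hq i (by simp [hJf])) hqp⟩
    haveI hFinNe : Nonempty (Fin J) := ⟨hJfne.choose⟩
    set d : Fin J → ℝ := fun l => (w' l (p l) * Pf w v θ p l) *
      (1 - w'' l (p l) / (w' l (p l)) ^ 2) with hd
    have hdneg : ∀ l ∈ Jf, d l < 0 := by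
      intro l hl
      exact mul_neg_of_neg_of_pos
        (mul_neg_of_neg_of_pos (hneg l (p l) (hp l)) (hPfpos p l))
        (by linarith [hsq l (p l) (hp l)])
    set m : ℝ := Jf.inf' hJfne (fun l => -(d l)) with hm
    have hmpos : 0 < m := by
      rw [hm, Finset.lt_inf'_iff]
      intro l hl
      linarith [hdneg l hl]
    have hdle : ∀ l ∈ Jf, d l ≤ -m := by
      intro l hl
      have := Finset.inf'_le (fun l => -(d l)) hl
      linarith
    have hcard : (0:ℝ) < (Jf.card : ℝ) := by
      exact_mod_cast Finset.card_pos.2 hJfne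
    set c₀ : ℝ := m / (2 * (Jf.card : ℝ)) with hc₀
    have hc₀pos : 0 < c₀ := by positivity
    -- little-o bound on the gradient components
    have hlo : ∀ᶠ h : (Fin J → ℝ) in 𝓝 0, ∀ l ∈ Jf,
        |g w w' v θ c Jf l (p + h) - g w w' v θ c Jf l p
          - dG w w' w'' v θ c Jf l p h| ≤ c₀ * ‖h‖ := by
      rw [eventually_all_finset]
      intro l hl
      have h1 := hasFDerivAt_iff_isLittleO_nhds_zero.1
        (hG w w' w'' v θ c Jf hd1 hd2 hp l)
      have h2 := (Asymptotics.isLittleO_iff.1 h1) hc₀pos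
      filter_upwards [h2] with h hh
      simpa [Real.norm_eq_abs] using hh
    rcases Metric.eventually_nhds_iff.1 hlo with ⟨δ, hδpos, hδ⟩
    set pmin : ℝ := Finset.univ.inf' Finset.univ_nonempty p with hpmin
    have hpminpos : 0 < pmin := by
      rw [hpmin, Finset.lt_inf'_iff]
      exact fun i _ => hp i
    refine ⟨min δ pmin, lt_min hδpos hpminpos, ?_⟩
    intro q hqout hqne hqdist
    set u : Fin J → ℝ := q - p with hu
    have husupp : ∀ i, i ∉ Jf → u i = 0 := by
      intro i hi; simp [hu, hqout i hi]
    have hunorm : ‖u‖ < min δ pmin := by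
      rw [hu, ← dist_eq_norm]; exact hqdist
    have hune : u ≠ 0 := sub_ne_zero.2 hqne
    have hupos : 0 < ‖u‖ := norm_pos_iff.2 hune
    have huabs : ∀ i, |u i| ≤ ‖u‖ := by
      intro i; simpa [Real.norm_eq_abs] using norm_le_pi_norm u i
    -- p + t • u stays in the positive orthant for t ∈ [0,1]
    have horth : ∀ t ∈ Icc (0:ℝ) 1, ∀ i, 0 < (p + t • u) i := by
      intro t ht i
      have h1 : |t * u i| ≤ ‖u‖ := by
        rw [abs_mul]
        calc |t| * |u i| ≤ 1 * |u i| := by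
              apply mul_le_mul_of_nonneg_right _ (abs_nonneg _)
              rw [abs_of_nonneg ht.1]; exact ht.2
          _ = |u i| := one_mul _
          _ ≤ ‖u‖ := huabs i
      have h2 : ‖u‖ < p i :=
        lt_of_lt_of_le (lt_of_lt_of_le hunorm (min_le_right _ _))
          (by rw [hpmin]; exact Finset.inf'_le _ (Finset.mem_univ i))
      have h3 := (abs_le.1 h1).1
      simp only [Pi.add_apply, Pi.smul_apply, smul_eq_mul]
      linarith
    -- index attaining the sup norm lies in Jf
    have hattain : ∃ i ∈ Jf, ‖u‖ = |u i| := by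
      obtain ⟨i, -, hieq⟩ := Finset.exists_mem_eq_sup Finset.univ
        Finset.univ_nonempty (fun i => ‖u i‖₊)
      have hnorm : ‖u‖ = |u i| := by
        have : ‖u‖₊ = ‖u i‖₊ := by rw [Pi.nnnorm_def]; exact hieq
        have := congrArg (fun x : NNReal => (x : ℝ)) this
        simpa [Real.norm_eq_abs] using this
      refine ⟨i, ?_, hnorm⟩
      by_contra hiJ
      rw [husupp i hiJ] at hnorm
      simp only [abs_zero] at hnorm
      exact hune (norm_eq_zero.1 hnorm)
    -- the derivative of profit along the segment is negative
    have hkey : ∀ t ∈ Ioc (0:ℝ) 1, dπ w w' v θ c Jf (p + t • u) u < 0 := by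
      intro t ht
      have hhnorm : ‖t • u‖ = t * ‖u‖ := by
        rw [norm_smul, Real.norm_eq_abs, abs_of_pos ht.1]
      have hhδ : dist (t • u) (0 : Fin J → ℝ) < δ := by
        rw [dist_zero_right, hhnorm]
        calc t * ‖u‖ ≤ 1 * ‖u‖ := mul_le_mul_of_nonneg_right ht.2 (norm_nonneg _)
          _ = ‖u‖ := one_mul _
          _ < δ := lt_of_lt_of_le hunorm (min_le_left _ _)
      have herr := hδ hhδ
      have hx : ∀ i, 0 < (p + t • u) i := horth t ⟨ht.1.le, ht.2⟩
      have hgl0 : ∀ l ∈ Jf, g w w' v θ c Jf l p = 0 := by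
        intro l hl
        have h0 := foc l hl
        rw [dπ_single w w' v θ c Jf l hl p] at h0
        exact h0
      have hexp : dπ w w' v θ c Jf (p + t • u) u
          = ∑ l ∈ Jf, u l * g w w' v θ c Jf l (p + t • u) := by
        rw [clm_apply_supported Jf _ u husupp]
        refine Finset.sum_congr rfl fun l hl => ?_
        rw [dπ_single w w' v θ c Jf l hl]
        rfl
      have hdGu : ∀ l ∈ Jf, dG w w' w'' v θ c Jf l p (t • u) = t * (u l * d l) := by
        intro l hl
        rw [map_smul, clm_apply_supported Jf _ u husupp]
        have h1 : ∀ k ∈ Jf, u k * dG w w' w'' v θ c Jf l p (Pi.single k 1)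
            = if l = k then u k * d l else 0 := by
          intro k hk
          rw [hess l hl k hk]
          by_cases h : l = k <;> simp [h, hd]
        rw [Finset.sum_congr rfl h1, Finset.sum_ite_eq Jf l (fun k => u k * d l), if_pos hl]
        simp [smul_eq_mul]
      rw [hexp]
      have hsum : ∑ l ∈ Jf, u l * g w w' v θ c Jf l (p + t • u)
          = (∑ l ∈ Jf, t * (d l * u l ^ 2))
            + ∑ l ∈ Jf, u l * (g w w' v θ c Jf l (p + t • u)
              - g w w' v θ c Jf l p - dG w w' w'' v θ c Jf l p (t • u)) := by
        rw [← Finset.sum_add_distrib]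
        refine Finset.sum_congr rfl fun l hl => ?_
        rw [hdGu l hl, hgl0 l hl]
        ring
      rw [hsum]
      have hb1 : (∑ l ∈ Jf, t * (d l * u l ^ 2)) ≤ t * (-(m * ‖u‖ ^ 2)) := by
        have hA : ∑ l ∈ Jf, d l * u l ^ 2 ≤ ∑ l ∈ Jf, -m * u l ^ 2 :=
          Finset.sum_le_sum fun l hl =>
            mul_le_mul_of_nonneg_right (hdle l hl) (sq_nonneg _)
        have hge : ‖u‖ ^ 2 ≤ ∑ l ∈ Jf, u l ^ 2 := by
          obtain ⟨i, hiJ, hieq⟩ := hattain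
          calc ‖u‖ ^ 2 = u i ^ 2 := by rw [hieq, sq_abs]
            _ ≤ ∑ l ∈ Jf, u l ^ 2 :=
              Finset.single_le_sum (fun l _ => sq_nonneg (u l)) hiJ
        have h2 : ∑ l ∈ Jf, -m * u l ^ 2 = -m * ∑ l ∈ Jf, u l ^ 2 := by
          rw [Finset.mul_sum]
        calc (∑ l ∈ Jf, t * (d l * u l ^ 2)) = t * ∑ l ∈ Jf, d l * u l ^ 2 := by
              rw [Finset.mul_sum]
          _ ≤ t * (-(m * ‖u‖ ^ 2)) := by
              apply mul_le_mul_of_nonneg_left _ ht.1.le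
              rw [h2] at hA
              nlinarith [hge, hmpos]
      have hb2 : (∑ l ∈ Jf, u l * (g w w' v θ c Jf l (p + t • u)
          - g w w' v θ c Jf l p - dG w w' w'' v θ c Jf l p (t • u)))
          ≤ t * (m / 2 * ‖u‖ ^ 2) := by
        calc (∑ l ∈ Jf, u l * (g w w' v θ c Jf l (p + t • u)
              - g w w' v θ c Jf l p - dG w w' w'' v θ c Jf l p (t • u)))
            ≤ ∑ l ∈ Jf, ‖u‖ * (c₀ * (t * ‖u‖)) := by
              refine Finset.sum_le_sum fun l hl => ?_
              have h1 := herr l hl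
              rw [hhnorm] at h1
              calc u l * (g w w' v θ c Jf l (p + t • u)
                    - g w w' v θ c Jf l p - dG w w' w'' v θ c Jf l p (t • u))
                  ≤ |u l * (g w w' v θ c Jf l (p + t • u)
                    - g w w' v θ c Jf l p - dG w w' w'' v θ c Jf l p (t • u))| :=
                    le_abs_self _
                _ = |u l| * |g w w' v θ c Jf l (p + t • u)
                    - g w w' v θ c Jf l p - dG w w' w'' v θ c Jf l p (t • u)| :=
                    abs_mul _ _
                _ ≤ ‖u‖ * (c₀ * (t * ‖u‖)) := by
                    apply mul_le_mul (huabs l) h1 (abs_nonneg _) (norm_nonneg _)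
          _ = (Jf.card : ℝ) * (‖u‖ * (c₀ * (t * ‖u‖))) := by
              rw [Finset.sum_const, nsmul_eq_mul]
          _ = t * (m / 2 * ‖u‖ ^ 2) := by
              rw [hc₀]
              field_simp
      have hfinal : t * (-(m * ‖u‖ ^ 2)) + t * (m / 2 * ‖u‖ ^ 2) < 0 := by
        have : t * (m * ‖u‖ ^ 2) > 0 :=
          mul_pos ht.1 (mul_pos hmpos (pow_pos hupos 2))
        nlinarith
      linarith
    -- one-dimensional argument along the segment
    have hderiv : ∀ t ∈ Icc (0:ℝ) 1,
        HasDerivAt (fun t : ℝ => prof w v θ c Jf (p + t • u))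
          (dπ w w' v θ c Jf (p + t • u) u) t := by
      intro t ht
      have hγ : HasDerivAt (fun t : ℝ => p + t • u) u t := by
        have h1 := ((hasDerivAt_id t).smul_const u).const_add p
        simpa using h1
      exact (hprof w w' v θ c Jf hd1 (horth t ht)).comp_hasDerivAt (l := prof w v θ c Jf) t hγ
    have hanti : StrictAntiOn (fun t : ℝ => prof w v θ c Jf (p + t • u)) (Icc 0 1) := by
      apply strictAntiOn_of_deriv_neg (convex_Icc 0 1)
      · exact fun t ht => (hderiv t ht).continuousAt.continuousWithinAt
      · intro t ht
        rw [interior_Icc] at ht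
        rw [(hderiv t ⟨ht.1.le, ht.2.le⟩).deriv]
        exact hkey t ⟨ht.1, ht.2.le⟩
    have hfin := hanti (left_mem_Icc.2 zero_le_one) (right_mem_Icc.2 zero_le_one)
      zero_lt_one
    simp only [zero_smul, add_zero, one_smul, hu] at hfin
    simpa using hfin
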